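/- Let d be a negative squarefree integer with d ≡ 1 mod 4 and ω_K = (1+√d)/2. Let β ∈ ℂ be written β = q₁ + q₂ω_K with q₁, q₂ ∈ ℝ, and let α = (α₁, α₂) ∈ ℝ². Then √((q₂ − α₁)² + (q₁ + q₂(ω_K + ω̄_K) − α₂)²) ≥ (1/√(−d)) · |β − α″|, where α″ = α₂ − α₁/2 + (α₁√(−d)/2)·i. -/

import Mathlib

/-- The generator ω_K of the ring of integers: ω_K = (1+√d)/2 if d ≡ 1 (mod 4),
ω_K = √d otherwise, where √d = i√(-d). -/
noncomputable def omegaK (d : ℤ) : ℂ :=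
  if d % 4 = 1 then (1 + Complex.I * Real.sqrt (-(d : ℝ))) / 2
  else Complex.I * Real.sqrt (-(d : ℝ))

/-- for d ≡ 1 (mod 4), β = q₁ + q₂ω_K and α = (α₁, α₂) ∈ ℝ²,
√((q₂-α₁)² + (q₁ + q₂(ω_K + ω̄_K) - α₂)²) ≥ (1/√(-d))·|β - α″| where
α″ = α₂ - α₁/2 + (α₁√(-d)/2)i. -/
theorem dist_lower_bound_one_mod_four (d : ℤ) (hd : d < 0) (hsq : Squarefree d)
    (h4 : d % 4 = 1) (q₁ q₂ α₁ α₂ : ℝ) :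
    (1 / Real.sqrt (-(d : ℝ))) *
      ‖(((q₁ : ℂ) + (q₂ : ℂ) * omegaK d) -
        (((α₂ - α₁ / 2 : ℝ) : ℂ) + ((α₁ * Real.sqrt (-(d : ℝ)) / 2 : ℝ) : ℂ) * Complex.I))‖ ≤
    Real.sqrt ((q₂ - α₁) ^ 2 + (q₁ + q₂ * (2 * (omegaK d).re) - α₂) ^ 2) := by
  have hd3 : d ≤ -3 := by omega
  have hdpos : (0:ℝ) < -(d:ℝ) := by
    have : (d:ℝ) < 0 := by exact_mod_cast hd
    linarith
  set s := Real.sqrt (-(d : ℝ)) with hsdef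
  have hs0 : 0 < s := Real.sqrt_pos.mpr hdpos
  have hs2 : s ^ 2 = -(d:ℝ) := Real.sq_sqrt hdpos.le
  have hs3 : (3:ℝ) ≤ s ^ 2 := by
    rw [hs2]
    have : (d:ℝ) ≤ -3 := by exact_mod_cast hd3
    linarith
  have hre : (omegaK d).re = 1/2 := by
    simp [omegaK, h4]
  have habs : ‖(((q₁ : ℂ) + (q₂ : ℂ) * omegaK d) -
        (((α₂ - α₁ / 2 : ℝ) : ℂ) + ((α₁ * s / 2 : ℝ) : ℂ) * Complex.I))‖ =
      Real.sqrt ((q₁ + q₂/2 - (α₂ - α₁/2))^2 + (q₂*s/2 - α₁*s/2)^2) := by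
    rw [Complex.norm_def, Complex.normSq_apply]
    congr 1
    · simp [omegaK, h4, Complex.div_re, Complex.div_im, Complex.normSq_apply]
      ring
  rw [hre, habs]
  rw [one_div, ← Real.sqrt_inv, ← Real.sqrt_mul (by positivity)]
  apply Real.sqrt_le_sqrt
  rw [← hs2]
  have h1 : s ≠ 0 := ne_of_gt hs0
  have key : ∀ A B : ℝ, (A - B/2)^2 + (s*B/2)^2 ≤ s^2 * (B^2 + A^2) := by
    intro A B
    nlinarith [sq_nonneg (A + B/2), sq_nonneg A, sq_nonneg B]
  have := key (q₁ + q₂ * (2 * (1/2:ℝ)) - α₂) (q₂ - α₁)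
  calc (s^2)⁻¹ * ((q₁ + q₂/2 - (α₂ - α₁/2))^2 + (q₂*s/2 - α₁*s/2)^2)
      ≤ (s^2)⁻¹ * (s^2 * ((q₂ - α₁)^2 + (q₁ + q₂ * (2 * (1/2:ℝ)) - α₂)^2)) := by
        apply mul_le_mul_of_nonneg_left _ (by positivity)
        have e : q₁ + q₂/2 - (α₂ - α₁/2) = (q₁ + q₂ * (2 * (1/2:ℝ)) - α₂) - (q₂ - α₁)/2 := by ring
        have e2 : q₂*s/2 - α₁*s/2 = s*(q₂ - α₁)/2 := by ring
        rw [e, e2]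
        exact this
    _ = (q₂ - α₁)^2 + (q₁ + q₂ * (2 * (1/2:ℝ)) - α₂)^2 := by
        field_simp
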